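/- arXiv:1805.09694 — 3 statements merged into one kernel-verified Lean document; each statement's English description precedes it below -/
import Mathlib

section
/- Let a ≤ b be real numbers and let J ⊆ ℝ be any nonempty interval. Then the k-vector space Hom(k_{[a,b]}, k_J) is one-dimensional over k if J is a closed (hence compact) interval with J ⊆ [a,b], and is zero otherwise (in particular it vanishes whenever J is open or half-open, and whenever J is closed but not contained in [a,b]). -/
open CategoryTheory TopologicalSpace Set Topology

noncomputable section

variable (k : Type) [Field k]

/-- The support of the function `s : V ∩ I → k` is closed in `V`. -/
def SuppClosedIn (I V : Set ℝ) (s : ↥(V ∩ I) → k) : Prop :=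
  ∀ x ∈ V, x ∈ closure {y : ℝ | ∃ h : y ∈ V ∩ I, s ⟨y, h⟩ ≠ 0} →
    ∃ h : x ∈ V ∩ I, s ⟨x, h⟩ ≠ 0

lemma zero_locConst (I V : Set ℝ) :
    IsLocallyConstant (0 : ↥(V ∩ I) → k) ∧ SuppClosedIn k I V 0 := by
  constructor
  · exact IsLocallyConstant.const 0
  · intro x _ hx
    exfalso
    have h0 : {y : ℝ | ∃ h : y ∈ V ∩ I, (0 : ↥(V ∩ I) → k) ⟨y, h⟩ ≠ 0} = ∅ := by
      ext y; simp
    rw [h0, closure_empty] at hx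
    exact hx

/-- The sections over `V` of the sheaf `k_I`: locally constant functions on `V ∩ I`
whose support is closed in `V`. -/
def secSub (I V : Set ℝ) : Submodule k (↥(V ∩ I) → k) where
  carrier := {s | IsLocallyConstant s ∧ SuppClosedIn k I V s}
  zero_mem' := zero_locConst k I V
  add_mem' := by
    rintro s t ⟨hslc, hscl⟩ ⟨htlc, htcl⟩
    have hlc : IsLocallyConstant (s + t) := hslc.comp₂ htlc (· + ·)
    refine ⟨hlc, ?_⟩
    intro x hxV hxcl
    have hsub : {y : ℝ | ∃ h : y ∈ V ∩ I, (s + t) ⟨y, h⟩ ≠ 0}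
        ⊆ {y : ℝ | ∃ h : y ∈ V ∩ I, s ⟨y, h⟩ ≠ 0}
          ∪ {y : ℝ | ∃ h : y ∈ V ∩ I, t ⟨y, h⟩ ≠ 0} := by
      rintro y ⟨h, hy⟩
      by_cases hsy : s ⟨y, h⟩ = 0
      · refine Or.inr ⟨h, fun h0 => hy ?_⟩
        show s ⟨y, h⟩ + t ⟨y, h⟩ = 0
        rw [hsy, h0, add_zero]
      · exact Or.inl ⟨h, hsy⟩
    have hxVI : x ∈ V ∩ I := by
      have hcl2 := closure_mono hsub hxcl
      rw [closure_union] at hcl2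
      rcases hcl2 with h | h
      · exact (hscl x hxV h).choose
      · exact (htcl x hxV h).choose
    refine ⟨hxVI, ?_⟩
    have hA : IsClosed {y : ↥(V ∩ I) | (s + t) y ≠ 0} := by
      have h1 : IsOpen ((s + t) ⁻¹' {0}) := hlc {0}
      have h2 := h1.isClosed_compl
      have h3 : ((s + t) ⁻¹' {0})ᶜ = {y : ↥(V ∩ I) | (s + t) y ≠ 0} := by
        ext y; simp
      exact h3 ▸ h2
    have hmem : (⟨x, hxVI⟩ : ↥(V ∩ I)) ∈ closure {y : ↥(V ∩ I) | (s + t) y ≠ 0} := by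
      rw [closure_subtype]
      have himg : Subtype.val '' {y : ↥(V ∩ I) | (s + t) y ≠ 0}
          = {y : ℝ | ∃ h : y ∈ V ∩ I, (s + t) ⟨y, h⟩ ≠ 0} := by
        ext y
        constructor
        · rintro ⟨z, hz, rfl⟩; exact ⟨z.2, hz⟩
        · rintro ⟨h, hy⟩; exact ⟨⟨y, h⟩, hy, rfl⟩
      rw [himg]
      exact hxcl
    have := hA.closure_eq ▸ hmem
    exact this
  smul_mem' := by
    intro c s hs
    rcases hs with ⟨hlc, hcl⟩
    by_cases hc : c = 0
    · subst hc
      rw [zero_smul]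
      exact zero_locConst k I V
    · constructor
      · exact hlc.comp (fun a => c • a)
      · intro x hxV hxcl
        have hset : {y : ℝ | ∃ h : y ∈ V ∩ I, (c • s) ⟨y, h⟩ ≠ 0}
            = {y : ℝ | ∃ h : y ∈ V ∩ I, s ⟨y, h⟩ ≠ 0} := by
          ext y
          constructor
          · rintro ⟨h, hy⟩
            refine ⟨h, fun h0 => hy ?_⟩
            show c • s ⟨y, h⟩ = 0
            rw [h0, smul_zero]
          · rintro ⟨h, hy⟩
            exact ⟨h, by simpa [smul_eq_zero, hc] using hy⟩
        rw [hset] at hxcl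
        obtain ⟨h, hy⟩ := hcl x hxV hxcl
        exact ⟨h, by simpa [smul_eq_zero, hc] using hy⟩
/-- Restriction of sections. -/
def resFun (I : Set ℝ) {V W : Set ℝ} (h : W ⊆ V) (s : ↥(V ∩ I) → k) : ↥(W ∩ I) → k :=
  fun y => s ⟨y.1, ⟨h y.2.1, y.2.2⟩⟩

lemma resFun_mem (I : Set ℝ) {V W : Set ℝ} (h : W ⊆ V) (s : ↥(V ∩ I) → k)
    (hs : s ∈ secSub k I V) : resFun k I h s ∈ secSub k I W := by
  obtain ⟨hlc, hcl⟩ := hs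
  constructor
  · exact hlc.comp_continuous (Continuous.subtype_mk continuous_subtype_val _)
  · intro x hxW hxcl
    have hsub : {y : ℝ | ∃ h' : y ∈ W ∩ I, resFun k I h s ⟨y, h'⟩ ≠ 0}
        ⊆ {y : ℝ | ∃ h' : y ∈ V ∩ I, s ⟨y, h'⟩ ≠ 0} := by
      rintro y ⟨h', hy⟩
      exact ⟨⟨h h'.1, h'.2⟩, hy⟩
    obtain ⟨hxVI, hne⟩ := hcl x (h hxW) (closure_mono hsub hxcl)
    exact ⟨⟨hxW, hxVI.2⟩, hne⟩

/-- Restriction as a linear map. -/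
def resLM (I : Set ℝ) {V W : Set ℝ} (h : W ⊆ V) : secSub k I V →ₗ[k] secSub k I W where
  toFun s := ⟨resFun k I h s.1, resFun_mem k I h s.1 s.2⟩
  map_add' s t := rfl
  map_smul' c s := rfl

/-- The presheaf `k_I` on `ℝ`. -/
def intervalPresheaf (I : Set ℝ) : TopCat.Presheaf (ModuleCat.{0} k) (TopCat.of ℝ) where
  obj V := ModuleCat.of k (secSub k I V.unop.1)
  map {V W} f := ModuleCat.ofHom (resLM k I (leOfHom f.unop))
  map_id V := rfl
  map_comp f g := rfl
theorem intervalPresheaf_isSheaf (I : Set ℝ) : (intervalPresheaf k I).IsSheaf := by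
  classical
  rw [TopCat.Presheaf.isSheaf_iff_isSheafUniqueGluing]
  intro ι U sf hcomp
  change ∀ i, secSub k I (U i).1 at sf
  -- pointwise compatibility
  have key : ∀ (i j : ι) (x : ℝ) (hxi : x ∈ (U i).1 ∩ I) (hxj : x ∈ (U j).1 ∩ I),
      (sf i).1 ⟨x, hxi⟩ = (sf j).1 ⟨x, hxj⟩ := by
    intro i j x hxi hxj
    have h := hcomp i j
    have hmem : x ∈ (U i ⊓ U j).1 ∩ I := ⟨⟨hxi.1, hxj.1⟩, hxi.2⟩
    have h2 := congrFun (congrArg Subtype.val h) ⟨x, hmem⟩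
    exact h2
  have hmemS : ∀ x : ↥((iSup U : Opens (TopCat.of ℝ)).1 ∩ I), ∃ i, x.1 ∈ U i := by
    intro x
    exact Opens.mem_iSup.mp x.2.1
  set idx : ↥((iSup U : Opens (TopCat.of ℝ)).1 ∩ I) → ι := fun x => (hmemS x).choose with hidxdef
  have hidx : ∀ x, x.1 ∈ U (idx x) := fun x => (hmemS x).choose_spec
  set s₀ : ↥((iSup U : Opens (TopCat.of ℝ)).1 ∩ I) → k :=
    fun x => (sf (idx x)).1 ⟨x.1, ⟨hidx x, x.2.2⟩⟩ with hs₀def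
  have hs₀ : ∀ (x : ↥((iSup U : Opens (TopCat.of ℝ)).1 ∩ I)) (i : ι) (hx : x.1 ∈ U i),
      s₀ x = (sf i).1 ⟨x.1, ⟨hx, x.2.2⟩⟩ :=
    fun x i hx => key (idx x) i x.1 ⟨hidx x, x.2.2⟩ ⟨hx, x.2.2⟩
  have hlc : IsLocallyConstant s₀ := by
    rw [IsLocallyConstant.iff_exists_open]
    intro x
    obtain ⟨i, hi⟩ := hmemS x
    have hlci : IsLocallyConstant ((sf i).1 : ↥((U i).1 ∩ I) → k) := (sf i).2.1
    obtain ⟨W, hWopen, hpW, hWconst⟩ := hlci.exists_open (⟨x.1, ⟨hi, x.2.2⟩⟩ : ↥((U i).1 ∩ I))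
    obtain ⟨O, hOopen, hWO⟩ := isOpen_induced_iff.mp hWopen
    subst hWO
    refine ⟨Subtype.val ⁻¹' (O ∩ (U i).1), (hOopen.inter (U i).2).preimage continuous_subtype_val,
      ⟨hpW, hi⟩, ?_⟩
    intro y hy
    have hyi : y.1 ∈ U i := hy.2
    rw [hs₀ y i hyi, hs₀ x i hi]
    exact hWconst ⟨y.1, ⟨hyi, y.2.2⟩⟩ hy.1
  have hscl : SuppClosedIn k I (iSup U : Opens (TopCat.of ℝ)).1 s₀ := by
    intro x hxS hxcl
    obtain ⟨i, hi⟩ := Opens.mem_iSup.mp hxS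
    have h1 : x ∈ closure ({y : ℝ | ∃ h : y ∈ (iSup U : Opens (TopCat.of ℝ)).1 ∩ I, s₀ ⟨y, h⟩ ≠ 0}
        ∩ (U i).1) := by
      rw [mem_closure_iff] at hxcl ⊢
      intro O hO hxO
      obtain ⟨z, hz⟩ := hxcl (O ∩ (U i).1) (hO.inter (U i).2) ⟨hxO, hi⟩
      exact ⟨z, hz.1.1, hz.2, hz.1.2⟩
    have hsub : {y : ℝ | ∃ h : y ∈ (iSup U : Opens (TopCat.of ℝ)).1 ∩ I, s₀ ⟨y, h⟩ ≠ 0}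
        ∩ (U i).1 ⊆ {y : ℝ | ∃ h : y ∈ (U i).1 ∩ I, (sf i).1 ⟨y, h⟩ ≠ 0} := by
      rintro y ⟨⟨hy, hne⟩, hyi⟩
      refine ⟨⟨hyi, hy.2⟩, ?_⟩
      rw [← hs₀ ⟨y, hy⟩ i hyi]
      exact hne
    obtain ⟨hyUI, hne⟩ := (sf i).2.2 x hi (closure_mono hsub h1)
    refine ⟨⟨hxS, hyUI.2⟩, ?_⟩
    rw [hs₀ ⟨x, ⟨hxS, hyUI.2⟩⟩ i hyUI.1]
    exact hne
  refine ⟨⟨s₀, hlc, hscl⟩, ?_, ?_⟩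
  · intro i
    apply Subtype.ext
    funext y
    exact hs₀ ⟨y.1, ⟨leOfHom (Opens.leSupr U i) y.2.1, y.2.2⟩⟩ i y.2.1
  · intro t ht
    apply Subtype.ext
    funext x
    have h := ht (idx x)
    have h2 := congrFun (congrArg Subtype.val h) ⟨x.1, ⟨hidx x, x.2.2⟩⟩
    exact h2

/-- The sheaf `k_I` on `ℝ` for an interval `I`: locally constant functions on `V ∩ I`
whose support is closed in `V`. -/
def intervalSheaf (I : Set ℝ) :
    Sheaf (Opens.grothendieckTopology (TopCat.of ℝ)) (ModuleCat.{0} k) :=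
  ⟨intervalPresheaf k I, intervalPresheaf_isSheaf k I⟩
/-- The category of sheaves of `k`-vector spaces on `ℝ`. -/
abbrev RealSheafCat := Sheaf (Opens.grothendieckTopology (TopCat.of ℝ)) (ModuleCat.{0} k)

instance sheafHomSMul (F G : RealSheafCat k) : SMul k (F ⟶ G) :=
  ⟨fun c f => ⟨c • f.hom⟩⟩

instance sheafHomModule (F G : RealSheafCat k) : Module k (F ⟶ G) :=
  Function.Injective.module k
    { toFun := fun f : F ⟶ G => f.hom
      map_zero' := rfl
      map_add' := fun _ _ => rfl }
    (fun _ _ h => Sheaf.hom_ext h) (fun _ _ => rfl)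

instance : HasExt.{1} (RealSheafCat k) := by
  letI := HasDerivedCategory.standard (RealSheafCat k)
  exact hasExt_of_hasDerivedCategory _

/-- The interval `(a, b)` with possibly infinite endpoints. -/
def Ioo' (a b : EReal) : Set ℝ := {x : ℝ | a < (x : EReal) ∧ (x : EReal) < b}

/-- The interval `[a, b)` with a possibly infinite right endpoint. -/
def Ico' (a : ℝ) (b : EReal) : Set ℝ := {x : ℝ | a ≤ x ∧ (x : EReal) < b}

/-- The interval `(a, b]` with a possibly infinite left endpoint. -/
def Ioc' (a : EReal) (b : ℝ) : Set ℝ := {x : ℝ | a < (x : EReal) ∧ x ≤ b}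

/-- Identification of sheaves on the topological space `ℝ` with objects of `RealSheafCat`. -/
def toRS (F : TopCat.Sheaf (ModuleCat.{0} k) (TopCat.of ℝ)) : RealSheafCat k := F


/-- The constant-one section of `k_I` over `V`, for `I` closed. -/
def oneSec (I : Set ℝ) (hI : IsClosed I) (V : Set ℝ) : secSub k I V :=
  ⟨fun _ => 1, IsLocallyConstant.const 1, by
    intro x hxV hx
    have hsub : {y : ℝ | ∃ h : y ∈ V ∩ I, (fun (_ : ↥(V ∩ I)) => (1:k)) ⟨y,h⟩ ≠ 0} = V ∩ I := by
      ext y; simp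
    rw [hsub] at hx
    have hxI : x ∈ I := by
      have := closure_mono (inter_subset_right : V ∩ I ⊆ I) hx
      rwa [hI.closure_eq] at this
    exact ⟨⟨hxV, hxI⟩, one_ne_zero⟩⟩

lemma nat_apply (I J' : Set ℝ) (f : intervalSheaf k I ⟶ intervalSheaf k J')
    {V W : Opens (TopCat.of ℝ)} (h : W ≤ V) (s : secSub k I V.1) :
    f.hom.app (Opposite.op W) (resLM k I h s) = resLM k J' h (f.hom.app (Opposite.op V) s) := by
  have h1 := f.hom.naturality (homOfLE h).op
  have h2 := ConcreteCategory.congr_hom h1 s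
  exact h2
def mkO (O : Set ℝ) (h : IsOpen O) : Opens (TopCat.of ℝ) := ⟨O, h⟩

lemma resLM_apply (I : Set ℝ) {V W : Opens (TopCat.of ℝ)} (h : W ≤ V) (s : secSub k I V.1)
    (x : ℝ) (hx : x ∈ W.1 ∩ I) :
    ((resLM k I (h : W.1 ⊆ V.1) s).1 ⟨x, hx⟩ : k) = s.1 ⟨x, ⟨h hx.1, hx.2⟩⟩ := rfl

lemma master (a b : ℝ) (J : Set ℝ) (f : intervalSheaf k (Set.Icc a b) ⟶ intervalSheaf k J)
    (V : Opens (TopCat.of ℝ)) (s : secSub k (Set.Icc a b) V.1) (x : ℝ) (hx : x ∈ V.1 ∩ J) :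
    ((f.hom.app (Opposite.op V) s).1 ⟨x, hx⟩ : k) =
      (if h : x ∈ Set.Icc a b then (s.1 ⟨x, ⟨hx.1, h⟩⟩ : k) else 0) *
        ((f.hom.app (Opposite.op ⊤)
            (oneSec k (Set.Icc a b) isClosed_Icc (⊤ : Opens (TopCat.of ℝ)).1)).1
          ⟨x, ⟨trivial, hx.2⟩⟩ : k) := by
  set one := oneSec k (Set.Icc a b) isClosed_Icc (⊤ : Opens (TopCat.of ℝ)).1 with hone_def
  by_cases hxI : x ∈ Set.Icc a b
  · obtain ⟨hlc, -⟩ := s.2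
    obtain ⟨U, hUopen, hxU, hUconst⟩ := hlc.exists_open ⟨x, ⟨hx.1, hxI⟩⟩
    obtain ⟨O, hO, rfl⟩ := isOpen_induced_iff.mp hUopen
    set W : Opens (TopCat.of ℝ) := V ⊓ mkO O hO with hWdef
    have hWV : W ≤ V := inf_le_left
    have hxW : x ∈ W.1 := ⟨hx.1, hxU⟩
    set c : k := s.1 ⟨x, ⟨hx.1, hxI⟩⟩ with hc_def
    have hres : resLM k (Set.Icc a b) hWV s = c • oneSec k (Set.Icc a b) isClosed_Icc W.1 := by
      apply Subtype.ext
      funext y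
      have hyV : (y.1 : ℝ) ∈ V.1 := hWV y.2.1
      have hyI : (y.1 : ℝ) ∈ Set.Icc a b := y.2.2
      have hyO : (y.1 : ℝ) ∈ O := y.2.1.2
      show s.1 ⟨y.1, ⟨hyV, hyI⟩⟩ = c • (1 : k)
      rw [smul_eq_mul, mul_one]
      exact hUconst ⟨y.1, ⟨hyV, hyI⟩⟩ hyO
    have hWt : W ≤ (⊤ : Opens (TopCat.of ℝ)) := le_top
    have honeres : resLM k (Set.Icc a b) hWt one = oneSec k (Set.Icc a b) isClosed_Icc W.1 :=
      Subtype.ext rfl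
    have h1 := nat_apply k (Set.Icc a b) J f hWV s
    have h2 : f.hom.app (Opposite.op W) (oneSec k (Set.Icc a b) isClosed_Icc W.1)
        = resLM k J hWt (f.hom.app (Opposite.op ⊤) one) := by
      rw [← honeres]; exact nat_apply k (Set.Icc a b) J f hWt one
    have hxWJ : x ∈ W.1 ∩ J := ⟨hxW, hx.2⟩
    calc ((f.hom.app (Opposite.op V) s).1 ⟨x, hx⟩ : k)
        = (resLM k J hWV (f.hom.app (Opposite.op V) s)).1 ⟨x, hxWJ⟩ := rfl
      _ = (f.hom.app (Opposite.op W) (resLM k (Set.Icc a b) hWV s)).1 ⟨x, hxWJ⟩ := by rw [h1]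
      _ = (f.hom.app (Opposite.op W) (c • oneSec k (Set.Icc a b) isClosed_Icc W.1)).1
            ⟨x, hxWJ⟩ := by rw [hres]
      _ = (c • f.hom.app (Opposite.op W) (oneSec k (Set.Icc a b) isClosed_Icc W.1)).1
            ⟨x, hxWJ⟩ := by
          exact congrArg (fun t => (t : secSub k J W.1).1 ⟨x, hxWJ⟩)
            (LinearMap.map_smul (f.hom.app (Opposite.op W)).hom c (oneSec k (Set.Icc a b) isClosed_Icc W.1))
      _ = c • ((f.hom.app (Opposite.op W) (oneSec k (Set.Icc a b) isClosed_Icc W.1)).1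
            ⟨x, hxWJ⟩) := rfl
      _ = c • ((resLM k J hWt (f.hom.app (Opposite.op ⊤) one)).1 ⟨x, hxWJ⟩) := by rw [h2]
      _ = c • ((f.hom.app (Opposite.op ⊤) one).1 ⟨x, ⟨trivial, hx.2⟩⟩) := rfl
      _ = _ := by rw [dif_pos hxI, smul_eq_mul]
  · set W : Opens (TopCat.of ℝ) := V ⊓ mkO (Set.Icc a b)ᶜ isClosed_Icc.isOpen_compl with hWdef
    have hWV : W ≤ V := inf_le_left
    have hxW : x ∈ W.1 := ⟨hx.1, hxI⟩
    have hres0 : resLM k (Set.Icc a b) hWV s = 0 :=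
      Subtype.ext (funext fun y => absurd y.2.2 y.2.1.2)
    have h1 := nat_apply k (Set.Icc a b) J f hWV s
    have hxWJ : x ∈ W.1 ∩ J := ⟨hxW, hx.2⟩
    calc ((f.hom.app (Opposite.op V) s).1 ⟨x, hx⟩ : k)
        = (resLM k J hWV (f.hom.app (Opposite.op V) s)).1 ⟨x, hxWJ⟩ := rfl
      _ = (f.hom.app (Opposite.op W) (resLM k (Set.Icc a b) hWV s)).1 ⟨x, hxWJ⟩ := by rw [h1]
      _ = (f.hom.app (Opposite.op W) 0).1 ⟨x, hxWJ⟩ := by rw [hres0]; rfl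
      _ = (0 : secSub k J W.1).1 ⟨x, hxWJ⟩ := by rw [map_zero]; rfl
      _ = 0 := rfl
      _ = _ := by rw [dif_neg hxI, zero_mul]
lemma t_const (J : Set ℝ) (hJ : J.OrdConnected) (t : secSub k J (⊤ : Opens (TopCat.of ℝ)).1)
    (x y : ℝ) (hx : x ∈ J) (hy : y ∈ J) :
    t.1 ⟨x, ⟨trivial, hx⟩⟩ = t.1 ⟨y, ⟨trivial, hy⟩⟩ := by
  have h1 : ((⊤ : Opens (TopCat.of ℝ)).1 ∩ J : Set ℝ) = J :=
    Set.ext fun z => ⟨fun h => h.2, fun h => ⟨trivial, h⟩⟩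
  have hpre : _root_.IsPreconnected ((⊤ : Opens (TopCat.of ℝ)).1 ∩ J : Set ℝ) := by
    rw [h1]; exact hJ.isPreconnected
  haveI := Subtype.preconnectedSpace hpre
  exact t.2.1.apply_eq_of_preconnectedSpace ⟨x, ⟨trivial, hx⟩⟩ ⟨y, ⟨trivial, hy⟩⟩

lemma f_eq_zero (a b : ℝ) (J : Set ℝ) (f : intervalSheaf k (Set.Icc a b) ⟶ intervalSheaf k J)
    (h0 : ∀ (x : ℝ) (hx : x ∈ J),
      ((f.hom.app (Opposite.op ⊤)
          (oneSec k (Set.Icc a b) isClosed_Icc (⊤ : Opens (TopCat.of ℝ)).1)).1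
        ⟨x, ⟨trivial, hx⟩⟩ : k) = 0) : f = 0 := by
  apply Sheaf.hom_ext
  apply NatTrans.ext
  funext V
  induction V using Opposite.rec with
  | op V =>
    apply ModuleCat.hom_ext
    apply LinearMap.ext
    intro s
    apply Subtype.ext
    funext y
    have hm := master k a b J f V s y.1 y.2
    rw [h0 y.1 y.2.2, mul_zero] at hm
    exact hm
/-- Restriction of a section of `k_{[a,b]}` to a closed subinterval `J`. -/
def resSec (a b : ℝ) (J : Set ℝ) (hJI : J ⊆ Set.Icc a b) (V : Set ℝ)
    (s : secSub k (Set.Icc a b) V) : ↥(V ∩ J) → k :=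
  fun y => s.1 ⟨y.1, ⟨y.2.1, hJI y.2.2⟩⟩

lemma resSec_mem (a b : ℝ) (J : Set ℝ) (hJc : IsClosed J) (hJI : J ⊆ Set.Icc a b) (V : Set ℝ)
    (s : secSub k (Set.Icc a b) V) : resSec k a b J hJI V s ∈ secSub k J V := by
  constructor
  · exact s.2.1.comp_continuous (Continuous.subtype_mk continuous_subtype_val _)
  · intro x hxV hx
    have hsub : {y : ℝ | ∃ h : y ∈ V ∩ J, resSec k a b J hJI V s ⟨y, h⟩ ≠ 0} ⊆
        {y : ℝ | ∃ h : y ∈ V ∩ Set.Icc a b, s.1 ⟨y, h⟩ ≠ 0} ∩ J := by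
      rintro y ⟨h, hy⟩
      exact ⟨⟨⟨h.1, hJI h.2⟩, hy⟩, h.2⟩
    have hx2 := closure_mono hsub hx
    have hxJ : x ∈ J := by
      have := closure_mono (inter_subset_right) hx2
      rwa [hJc.closure_eq] at this
    obtain ⟨hVI, hne⟩ := s.2.2 x hxV (closure_mono (inter_subset_left) hx2)
    exact ⟨⟨hxV, hxJ⟩, hne⟩

/-- The restriction morphism `k_{[a,b]} ⟶ k_J` for `J ⊆ [a,b]` closed. -/
def resMor (a b : ℝ) (J : Set ℝ) (hJc : IsClosed J) (hJI : J ⊆ Set.Icc a b) :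
    intervalSheaf k (Set.Icc a b) ⟶ intervalSheaf k J :=
  ⟨{ app := fun V => ModuleCat.ofHom
      { toFun := fun s => ⟨resSec k a b J hJI V.unop.1 s, resSec_mem k a b J hJc hJI V.unop.1 s⟩
        map_add' := fun _ _ => rfl
        map_smul' := fun _ _ => rfl }
     naturality := fun V W g => rfl }⟩
/-- For real numbers `a ≤ b` and a nonempty interval `J ⊆ ℝ`, the space
`Hom(k_{[a,b]}, k_J)` is one-dimensional over `k` if `J` is closed with `J ⊆ [a,b]`,
and is zero otherwise. -/
theorem hom_compact_interval (k : Type) [Field k] (a b : ℝ) (hab : a ≤ b)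
    (J : Set ℝ) (hJne : J.Nonempty) (hJ : J.OrdConnected) :
    ((IsClosed J ∧ J ⊆ Set.Icc a b) →
      Module.rank k (intervalSheaf k (Set.Icc a b) ⟶ intervalSheaf k J) = 1) ∧
    (¬ (IsClosed J ∧ J ⊆ Set.Icc a b) →
      ∀ f : intervalSheaf k (Set.Icc a b) ⟶ intervalSheaf k J, f = 0) := by
  classical
  obtain ⟨j₀, hj₀⟩ := hJne
  set One := oneSec k (Set.Icc a b) isClosed_Icc (⊤ : Opens (TopCat.of ℝ)).1 with hOne
  constructor
  · rintro ⟨hJc, hJI⟩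
    set e : (intervalSheaf k (Set.Icc a b) ⟶ intervalSheaf k J) →ₗ[k] k :=
      { toFun := fun f => (f.hom.app (Opposite.op ⊤) One).1 ⟨j₀, ⟨trivial, hj₀⟩⟩
        map_add' := fun f g => rfl
        map_smul' := fun c f => rfl } with he
    have hinj : Function.Injective e := by
      intro f g hfg
      have h0 : e (f - g) = 0 := by rw [map_sub, hfg, sub_self]
      have h1 : f - g = 0 := by
        apply f_eq_zero
        intro x hx
        refine (t_const k J hJ _ x j₀ hx hj₀).trans ?_
        exact h0
      exact sub_eq_zero.mp h1
    have hsurj : Function.Surjective e := by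
      intro c
      refine ⟨c • resMor k a b J hJc hJI, ?_⟩
      rw [map_smul]
      have h1 : e (resMor k a b J hJc hJI) = 1 := rfl
      rw [h1, smul_eq_mul, mul_one]
    have hrk := (LinearEquiv.ofBijective e ⟨hinj, hsurj⟩).rank_eq
    rw [hrk, Module.rank_self]
  · intro hn f
    set t := f.hom.app (Opposite.op ⊤) One with ht
    by_cases hc : (t.1 ⟨j₀, ⟨trivial, hj₀⟩⟩ : k) = 0
    · apply f_eq_zero
      intro x hx
      rw [t_const k J hJ t x j₀ hx hj₀]
      exact hc
    · exfalso
      have hJI : J ⊆ Set.Icc a b := by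
        intro x hx
        by_contra hxI
        have hm := master k a b J f ⊤ One x ⟨trivial, hx⟩
        rw [dif_neg hxI, zero_mul] at hm
        exact hc (by rw [t_const k J hJ t j₀ x hj₀ hx]; exact hm)
      have hJc : IsClosed J := by
        rw [← closure_subset_iff_isClosed]
        intro x hx
        have hsupp : J ⊆ {y : ℝ |
            ∃ h : y ∈ ((⊤ : Opens (TopCat.of ℝ)).1 ∩ J : Set ℝ), t.1 ⟨y, h⟩ ≠ 0} := by
          intro y hy
          refine ⟨⟨trivial, hy⟩, ?_⟩
          rw [t_const k J hJ t y j₀ hy hj₀]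
          exact hc
        have h2 := t.2.2 x trivial (closure_mono hsupp hx)
        exact h2.choose.2
      exact hn ⟨hJc, hJI⟩


end
end

section
/- Let a, c ∈ ℝ ∪ {−∞}, b ∈ ℝ ∪ {+∞} and d ∈ ℝ, with a < b and c < d. Then the k-vector space Hom(k_{(a,b)}, k_{(c,d]}) is one-dimensional over k if c ≤ a < d, and is zero otherwise. -/
open CategoryTheory TopologicalSpace Set Topology

noncomputable section

variable (k : Type) [Field k]

namespace HomOpenIoc

open Opposite

variable (k : Type) [Field k]

lemma isOpen_Ioo' (a b : EReal) : IsOpen (Ioo' a b) := by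
  have h : Ioo' a b = ((↑) : ℝ → EReal) ⁻¹' (Set.Ioo a b) := rfl
  rw [h]
  exact isOpen_Ioo.preimage continuous_coe_real_ereal

/-- The open set `(a,b)` as an element of `Opens (TopCat.of ℝ)`. -/
def Uab (a b : EReal) : Opens (TopCat.of ℝ) := ⟨Ioo' a b, isOpen_Ioo' a b⟩

/-- The constant function `1`. -/
def oneFun (I W : Set ℝ) : ↥(W ∩ I) → k := fun _ => 1

lemma oneFun_mem (I W : Set ℝ) (hW : W ⊆ I) : oneFun k I W ∈ secSub k I W := by
  refine ⟨IsLocallyConstant.const 1, ?_⟩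
  intro x hxW _
  exact ⟨⟨hxW, hW hxW⟩, one_ne_zero⟩

/-- The constant section `1` of `k_{(a,b)}` over `(a,b)`. -/
def oneEl (a b : EReal) : secSub k (Ioo' a b) (Uab a b).1 :=
  ⟨oneFun k (Ioo' a b) (Uab a b).1, oneFun_mem k _ _ (fun _ hx => hx)⟩

lemma vanish_near (I : Set ℝ) {V : Set ℝ} (hV : IsOpen V) {s : ↥(V ∩ I) → k}
    (hs : s ∈ secSub k I V) {x : ℝ} (hxV : x ∈ V) (hxI : x ∉ I) :
    ∃ W : Set ℝ, IsOpen W ∧ x ∈ W ∧ W ⊆ V ∧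
      ∀ (y : ℝ) (hy : y ∈ V ∩ I), y ∈ W → s ⟨y, hy⟩ = 0 := by
  set T := {y : ℝ | ∃ h : y ∈ V ∩ I, s ⟨y, h⟩ ≠ 0} with hT
  have hxT : x ∉ closure T := fun h => hxI (hs.2 x hxV h).choose.2
  refine ⟨V ∩ (closure T)ᶜ, hV.inter isClosed_closure.isOpen_compl, ⟨hxV, hxT⟩,
    Set.inter_subset_left, ?_⟩
  intro y hy hyW
  by_contra hne
  exact hyW.2 (subset_closure ⟨hy, hne⟩)

lemma const_near (I : Set ℝ) (hI : IsOpen I) {V : Set ℝ} (hV : IsOpen V) {s : ↥(V ∩ I) → k}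
    (hs : s ∈ secSub k I V) {x : ℝ} (hx : x ∈ V ∩ I) :
    ∃ W : Set ℝ, IsOpen W ∧ x ∈ W ∧ W ⊆ V ∩ I ∧
      ∀ (y : ℝ) (hy : y ∈ V ∩ I), y ∈ W → s ⟨y, hy⟩ = s ⟨x, hx⟩ := by
  obtain ⟨U, hUopen, hpU, hUconst⟩ := hs.1.exists_open (⟨x, hx⟩ : ↥(V ∩ I))
  obtain ⟨O, hOopen, hO⟩ := isOpen_induced_iff.mp hUopen
  subst hO
  refine ⟨O ∩ (V ∩ I), hOopen.inter (hV.inter hI), ⟨hpU, hx⟩,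
    Set.inter_subset_right, ?_⟩
  intro y hy hyW
  exact hUconst ⟨y, hy⟩ hyW.1


lemma app_res (I J : Set ℝ)
    (f : intervalSheaf k I ⟶ intervalSheaf k J)
    {V W : Opens (TopCat.of ℝ)} (h : W ≤ V) (s : secSub k I V.1)
    (x : ℝ) (hx : x ∈ W.1 ∩ J) :
    (f.hom.app (op V) s).1 ⟨x, ⟨h hx.1, hx.2⟩⟩ =
      (f.hom.app (op W) ((resLM k I h) s)).1 ⟨x, hx⟩ := by
  have h1 := f.hom.naturality (homOfLE h).op
  have h2 : f.hom.app (op W) ((intervalPresheaf k I).map (homOfLE h).op s) =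
      (intervalPresheaf k J).map (homOfLE h).op (f.hom.app (op V) s) := by
    exact congrFun (congrArg (fun g => (ConcreteCategory.hom g : _ → _)) h1) s
  have h3 := congrFun (congrArg Subtype.val h2) ⟨x, hx⟩
  exact h3.symm


open scoped Classical in
lemma eval_app (a b : EReal) (J : Set ℝ)
    (f : intervalSheaf k (Ioo' a b) ⟶ intervalSheaf k J)
    (V : Opens (TopCat.of ℝ)) (s : secSub k (Ioo' a b) V.1) (x : ℝ) (hx : x ∈ V.1 ∩ J) :
    (f.hom.app (op V) s).1 ⟨x, hx⟩ =
      if h : x ∈ Ioo' a b then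
        s.1 ⟨x, ⟨hx.1, h⟩⟩ *
          (f.hom.app (op (Uab a b)) (oneEl k a b)).1 ⟨x, ⟨h, hx.2⟩⟩
      else 0 := by
  by_cases h : x ∈ Ioo' a b
  · rw [dif_pos h]
    obtain ⟨W, hWopen, hxW, hWsub, hWconst⟩ :=
      const_near k (Ioo' a b) (isOpen_Ioo' a b) V.2 s.2 (⟨hx.1, h⟩ : x ∈ V.1 ∩ Ioo' a b)
    set WO : Opens (TopCat.of ℝ) := ⟨W, hWopen⟩ with hWO
    have hWV : WO ≤ V := fun y hy => (hWsub hy).1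
    have hWU : WO ≤ Uab a b := fun y hy => (hWsub hy).2
    have hres : (resLM k (Ioo' a b) hWV) s =
        s.1 ⟨x, ⟨hx.1, h⟩⟩ • (resLM k (Ioo' a b) hWU) (oneEl k a b) := by
      apply Subtype.ext
      funext y
      have h1 : (resLM k (Ioo' a b) hWV s).1 y = s.1 ⟨y.1, ⟨hWV y.2.1, y.2.2⟩⟩ := rfl
      rw [h1, hWconst y.1 ⟨hWV y.2.1, y.2.2⟩ y.2.1]
      have h2 : ((s.1 ⟨x, ⟨hx.1, h⟩⟩ • (resLM k (Ioo' a b) hWU) (oneEl k a b)) :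
          secSub k (Ioo' a b) WO.1).1 y
          = s.1 ⟨x, ⟨hx.1, h⟩⟩ * (oneEl k a b).1 ⟨y.1, ⟨hWU y.2.1, y.2.2⟩⟩ := rfl
      rw [h2]
      show s.1 ⟨x, ⟨hx.1, h⟩⟩ = s.1 ⟨x, ⟨hx.1, h⟩⟩ * 1
      rw [mul_one]
    have hxWJ : x ∈ WO.1 ∩ J := ⟨hxW, hx.2⟩
    have e1 := app_res k (Ioo' a b) J f hWV s x hxWJ
    have e2 := app_res k (Ioo' a b) J f hWU (oneEl k a b) x ⟨hxW, hx.2⟩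
    have e3 : (f.hom.app (op V) s).1 ⟨x, hx⟩ = (f.hom.app (op V) s).1 ⟨x, ⟨hWV hxWJ.1, hxWJ.2⟩⟩ := rfl
    erw [e3, e1, hres, map_smul]
    have e4 : ((s.1 ⟨x, ⟨hx.1, h⟩⟩ •
        f.hom.app (op WO) ((resLM k (Ioo' a b) hWU) (oneEl k a b))) :
        secSub k J WO.1).1 ⟨x, hxWJ⟩
        = s.1 ⟨x, ⟨hx.1, h⟩⟩ *
          (f.hom.app (op WO) ((resLM k (Ioo' a b) hWU) (oneEl k a b))).1 ⟨x, hxWJ⟩ := rfl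
    rw [e4, ← e2]
  · rw [dif_neg h]
    obtain ⟨W, hWopen, hxW, hWsub, hWvan⟩ := vanish_near k (Ioo' a b) V.2 s.2 hx.1 h
    set WO : Opens (TopCat.of ℝ) := ⟨W, hWopen⟩ with hWO
    have hWV : WO ≤ V := hWsub
    have hres : (resLM k (Ioo' a b) hWV) s = 0 := by
      apply Subtype.ext
      funext y
      exact hWvan y.1 ⟨hWV y.2.1, y.2.2⟩ y.2.1
    have hxWJ : x ∈ WO.1 ∩ J := ⟨hxW, hx.2⟩
    have e1 := app_res k (Ioo' a b) J f hWV s x hxWJ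
    have e3 : (f.hom.app (op V) s).1 ⟨x, hx⟩ = (f.hom.app (op V) s).1 ⟨x, ⟨hWV hxWJ.1, hxWJ.2⟩⟩ := rfl
    erw [e3, e1, hres, map_zero]
    rfl


open scoped Classical in
/-- The underlying function of the canonical morphism `k_{(a,b)} → k_{(c,d]}`. -/
def gFun (a b : EReal) (c : EReal) (d : ℝ) (V : Set ℝ) (s : ↥(V ∩ Ioo' a b) → k) :
    ↥(V ∩ Ioc' c d) → k :=
  fun y => if h : y.1 ∈ Ioo' a b then s ⟨y.1, ⟨y.2.1, h⟩⟩ else 0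

open scoped Classical in
lemma gFun_mem {a b c : EReal} {d : ℝ} (hca : c ≤ a) {V : Set ℝ} (hV : IsOpen V)
    {s : ↥(V ∩ Ioo' a b) → k} (hs : s ∈ secSub k (Ioo' a b) V) :
    gFun k a b c d V s ∈ secSub k (Ioc' c d) V := by
  constructor
  · rw [IsLocallyConstant.iff_exists_open]
    intro x
    by_cases h : x.1 ∈ Ioo' a b
    · obtain ⟨W, hWopen, hxW, hWsub, hWconst⟩ :=
        const_near k (Ioo' a b) (isOpen_Ioo' a b) hV hs (⟨x.2.1, h⟩ : x.1 ∈ V ∩ Ioo' a b)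
      refine ⟨Subtype.val ⁻¹' W, hWopen.preimage continuous_subtype_val, hxW, ?_⟩
      intro y hy
      have hyI : y.1 ∈ Ioo' a b := (hWsub hy).2
      show gFun k a b c d V s y = gFun k a b c d V s x
      simp only [gFun]
      rw [dif_pos hyI, dif_pos h]
      exact hWconst y.1 ⟨y.2.1, hyI⟩ hy
    · obtain ⟨W, hWopen, hxW, hWsub, hWvan⟩ := vanish_near k (Ioo' a b) hV hs x.2.1 h
      refine ⟨Subtype.val ⁻¹' W, hWopen.preimage continuous_subtype_val, hxW, ?_⟩
      intro y hy
      show gFun k a b c d V s y = gFun k a b c d V s x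
      simp only [gFun]
      rw [dif_neg h]
      by_cases hyI : y.1 ∈ Ioo' a b
      · rw [dif_pos hyI]
        exact hWvan y.1 ⟨y.2.1, hyI⟩ hy
      · rw [dif_neg hyI]
  · intro x hxV hxcl
    have hsub : {y : ℝ | ∃ h : y ∈ V ∩ Ioc' c d, gFun k a b c d V s ⟨y, h⟩ ≠ 0}
        ⊆ {y : ℝ | ∃ h : y ∈ V ∩ Ioo' a b, s ⟨y, h⟩ ≠ 0} ∩ Set.Iic d := by
      rintro y ⟨hy, hne⟩
      by_cases hyI : y ∈ Ioo' a b
      · refine ⟨⟨⟨hy.1, hyI⟩, ?_⟩, hy.2.2⟩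
        intro h0
        apply hne
        simp only [gFun]
        rw [dif_pos hyI]
        exact h0
      · exfalso; apply hne; simp only [gFun]; rw [dif_neg hyI]
    have hclA : x ∈ closure {y : ℝ | ∃ h : y ∈ V ∩ Ioo' a b, s ⟨y, h⟩ ≠ 0} :=
      closure_mono (hsub.trans Set.inter_subset_left) hxcl
    have hxd : x ∈ Set.Iic d :=
      isClosed_Iic.closure_subset (closure_mono (hsub.trans Set.inter_subset_right) hxcl)
    obtain ⟨hxVI, hsne⟩ := hs.2 x hxV hclA
    have hcx : c < (x : EReal) := lt_of_le_of_lt hca hxVI.2.1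
    refine ⟨⟨hxV, hcx, hxd⟩, ?_⟩
    show gFun k a b c d V s ⟨x, ⟨hxV, hcx, hxd⟩⟩ ≠ 0
    simp only [gFun]
    rw [dif_pos (hxVI.2 : x ∈ Ioo' a b)]
    exact hsne


open scoped Classical in
/-- The canonical morphism `k_{(a,b)} → k_{(c,d]}` when `c ≤ a`. -/
def gHom (a b : EReal) (c : EReal) (d : ℝ) (hca : c ≤ a) :
    intervalSheaf k (Ioo' a b) ⟶ intervalSheaf k (Ioc' c d) :=
  ⟨{ app := fun V => ModuleCat.ofHom
      { toFun := fun s => ⟨gFun k a b c d V.unop.1 s.1, gFun_mem k hca V.unop.2 s.2⟩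
        map_add' := by
          intro s t
          apply Subtype.ext
          funext y
          show gFun k a b c d V.unop.1 (s.1 + t.1) y
            = gFun k a b c d V.unop.1 s.1 y + gFun k a b c d V.unop.1 t.1 y
          simp only [gFun]
          by_cases h : y.1 ∈ Ioo' a b
          · rw [dif_pos h, dif_pos h, dif_pos h]; rfl
          · rw [dif_neg h, dif_neg h, dif_neg h]; rw [add_zero]
        map_smul' := by
          intro m s
          apply Subtype.ext
          funext y
          show gFun k a b c d V.unop.1 (m • s.1) y = m • gFun k a b c d V.unop.1 s.1 y
          simp only [gFun]
          by_cases h : y.1 ∈ Ioo' a b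
          · rw [dif_pos h, dif_pos h]; rfl
          · rw [dif_neg h, dif_neg h]; rw [smul_zero] }
     naturality := by
       intro V W i
       apply ModuleCat.hom_ext
       apply LinearMap.ext
       intro s
       apply Subtype.ext
       funext y
       rfl }⟩

lemma hom_ext_of_one (a b : EReal) (c : EReal) (d : ℝ)
    (f : intervalSheaf k (Ioo' a b) ⟶ intervalSheaf k (Ioc' c d))
    (h0 : ∀ (x : ℝ) (hx : x ∈ (Uab a b).1 ∩ Ioc' c d),
      (f.hom.app (op (Uab a b)) (oneEl k a b)).1 ⟨x, hx⟩ = 0) : f = 0 := by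
  apply Sheaf.hom_ext
  apply NatTrans.ext
  funext V
  apply ModuleCat.hom_ext
  apply LinearMap.ext
  intro s
  apply Subtype.ext
  funext y
  have heq := eval_app k a b (Ioc' c d) f V.unop s y.1 y.2
  rw [Subtype.coe_eta] at heq
  rw [heq]
  have hz : ((0 : intervalSheaf k (Ioo' a b) ⟶ intervalSheaf k (Ioc' c d)).hom.app V s).1 y
      = 0 := rfl
  rw [hz]
  by_cases h : y.1 ∈ Ioo' a b
  · rw [dif_pos h, h0 y.1 ⟨h, y.2.2⟩, mul_zero]
  · rw [dif_neg h]


lemma S_preconnected (a b c : EReal) (d : ℝ) :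
    IsPreconnected (Ioo' a b ∩ Ioc' c d) := by
  apply Set.OrdConnected.isPreconnected
  constructor
  intro x hx y hy z hz
  exact ⟨⟨lt_of_lt_of_le hx.1.1 (EReal.coe_le_coe_iff.2 hz.1),
      lt_of_le_of_lt (EReal.coe_le_coe_iff.2 hz.2) hy.1.2⟩,
    lt_of_lt_of_le hx.2.1 (EReal.coe_le_coe_iff.2 hz.1), le_trans hz.2 hy.2.2⟩

lemma sec_const (a b c : EReal) (d : ℝ) (t : secSub k (Ioc' c d) (Ioo' a b))
    (x y : ↥(Ioo' a b ∩ Ioc' c d)) : t.1 x = t.1 y := by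
  haveI := Subtype.preconnectedSpace (S_preconnected a b c d)
  exact t.2.1.apply_eq_of_preconnectedSpace x y

end HomOpenIoc


/-- For `a, c ∈ ℝ ∪ {−∞}`, `b ∈ ℝ ∪ {+∞}`, `d ∈ ℝ`, with `a < b` and `c < d`,
the space `Hom(k_{(a,b)}, k_{(c,d]})` is one-dimensional over `k` if `c ≤ a < d`,
and is zero otherwise. -/
theorem hom_open_ioc (k : Type) [Field k] (a b : EReal) (hab : a < b)
    (c : EReal) (d : ℝ) (hcd : c < (d : EReal)) :
    ((c ≤ a ∧ a < (d : EReal)) →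
      Module.rank k (intervalSheaf k (Ioo' a b) ⟶ intervalSheaf k (Ioc' c d)) = 1) ∧
    (¬ (c ≤ a ∧ a < (d : EReal)) →
      ∀ f : intervalSheaf k (Ioo' a b) ⟶ intervalSheaf k (Ioc' c d), f = 0) := by
  open HomOpenIoc in
  constructor
  · rintro ⟨hca, had⟩
    obtain ⟨r, har, hrm⟩ := EReal.exists_between_coe_real (lt_min hab had)
    have hrb : (r : EReal) < b := lt_of_lt_of_le hrm (min_le_left _ _)
    have hrd : (r : EReal) < (d : EReal) := lt_of_lt_of_le hrm (min_le_right _ _)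
    have hrd' : r ≤ d := le_of_lt (EReal.coe_lt_coe_iff.1 hrd)
    have hrI : r ∈ Ioo' a b := ⟨har, hrb⟩
    have hr : r ∈ (Uab a b).1 ∩ Ioc' c d := ⟨hrI, lt_of_le_of_lt hca har, hrd'⟩
    have hmapadd : ∀ (f g : intervalSheaf k (Ioo' a b) ⟶ intervalSheaf k (Ioc' c d)),
        ((f + g).hom.app (Opposite.op (Uab a b)) (oneEl k a b)).1 ⟨r, hr⟩ =
        (f.hom.app (Opposite.op (Uab a b)) (oneEl k a b)).1 ⟨r, hr⟩ +
        (g.hom.app (Opposite.op (Uab a b)) (oneEl k a b)).1 ⟨r, hr⟩ := fun f g => rfl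
    set Φ : (intervalSheaf k (Ioo' a b) ⟶ intervalSheaf k (Ioc' c d)) →ₗ[k] k :=
      { toFun := fun f =>
          (f.hom.app (Opposite.op (Uab a b)) (oneEl k a b)).1 ⟨r, hr⟩
        map_add' := hmapadd
        map_smul' := fun m f => rfl } with hPhi
    have hker : ∀ f, Φ f = 0 → f = 0 := by
      intro f hf
      apply hom_ext_of_one
      intro x hx
      have hc := sec_const k a b c d
        (f.hom.app (Opposite.op (Uab a b)) (oneEl k a b)) ⟨x, hx⟩ ⟨r, hr⟩
      erw [hc]
      exact hf
    have hinj : Function.Injective Φ := by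
      rw [← LinearMap.ker_eq_bot]
      exact LinearMap.ker_eq_bot'.2 hker
    have hsurj : Function.Surjective Φ := by
      intro lam
      refine ⟨lam • gHom k a b c d hca, ?_⟩
      have h1 : Φ (gHom k a b c d hca) = 1 := by
        show gFun k a b c d (Uab a b).1 (oneEl k a b).1 ⟨r, hr⟩ = 1
        simp only [gFun]
        rw [dif_pos hrI]
        rfl
      rw [map_smul, h1, smul_eq_mul, mul_one]
    exact (LinearEquiv.ofBijective Φ ⟨hinj, hsurj⟩).rank_eq.trans (Module.rank_self k)
  · intro hn f
    apply hom_ext_of_one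
    intro x hx
    rcases not_and_or.1 hn with hac | had
    · have hac' : a < c := not_le.1 hac
      by_contra hne
      set t := f.hom.app (Opposite.op (Uab a b)) (oneEl k a b) with ht
      have hcne_top : c ≠ ⊤ := (hcd.trans (EReal.coe_lt_top d)).ne
      have hcne_bot : c ≠ ⊥ := (lt_of_le_of_lt bot_le hac').ne'
      set c0 := c.toReal with hc0
      have hcc : (c0 : EReal) = c := EReal.coe_toReal hcne_top hcne_bot
      have hcb : c < b := lt_trans hx.2.1 hx.1.2
      obtain ⟨r, hcr, hrm⟩ := EReal.exists_between_coe_real (lt_min hcb hcd)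
      have hc0r : c0 < r := by
        rw [← EReal.coe_lt_coe_iff, hcc]
        exact hcr
      have hIocsub : Set.Ioc c0 r ⊆
          {y : ℝ | ∃ h : y ∈ (Uab a b).1 ∩ Ioc' c d, t.1 ⟨y, h⟩ ≠ 0} := by
        intro y hy
        have hcy : c < (y : EReal) := by
          rw [← hcc]
          exact EReal.coe_lt_coe_iff.2 hy.1
        have hyb : (y : EReal) < b :=
          lt_of_le_of_lt (EReal.coe_le_coe_iff.2 hy.2) (lt_of_lt_of_le hrm (min_le_left _ _))
        have hyd : y ≤ d := le_of_lt (EReal.coe_lt_coe_iff.1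
          (lt_of_le_of_lt (EReal.coe_le_coe_iff.2 hy.2) (lt_of_lt_of_le hrm (min_le_right _ _))))
        have hay : a < (y : EReal) := lt_trans hac' hcy
        refine ⟨⟨⟨hay, hyb⟩, hcy, hyd⟩, ?_⟩
        have hc2 := sec_const k a b c d t ⟨y, ⟨⟨hay, hyb⟩, hcy, hyd⟩⟩ ⟨x, hx⟩
        erw [hc2]
        exact hne
      have hc0cl : c0 ∈ closure {y : ℝ | ∃ h : y ∈ (Uab a b).1 ∩ Ioc' c d, t.1 ⟨y, h⟩ ≠ 0} := by
        apply closure_mono hIocsub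
        rw [closure_Ioc (ne_of_lt hc0r)]
        exact Set.left_mem_Icc.2 (le_of_lt hc0r)
      have hc0U : c0 ∈ (Uab a b).1 := by
        refine ⟨?_, ?_⟩
        · rw [hcc]; exact hac'
        · rw [hcc]; exact hcb
      obtain ⟨hmem, -⟩ := t.2.2 c0 hc0U hc0cl
      have : c < (c0 : EReal) := hmem.2.1
      rw [hcc] at this
      exact absurd this (lt_irrefl c)
    · have had' : (d : EReal) ≤ a := not_lt.1 had
      exact absurd hx.1.1 (not_lt.2 (le_trans (EReal.coe_le_coe_iff.2 hx.2.2) had'))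


end
end

section
/- Let a ∈ ℝ, b ∈ ℝ ∪ {+∞} with a < b, and let c ≤ d be real numbers. Then the k-vector space Hom(k_{[a,b)}, k_{[c,d]}) is one-dimensional over k if a ≤ c < b, and is zero otherwise. -/
open CategoryTheory TopologicalSpace Set Topology

noncomputable section

variable (k : Type) [Field k]

namespace HomIco

variable {k}

lemma sec_const {I V : Set ℝ} (s : ↥(secSub k I V)) {P : Set ℝ} (hP : _root_.IsPreconnected P)
    (hPV : P ⊆ V ∩ I) {y z : ℝ} (hy : y ∈ P) (hz : z ∈ P) :
    s.1 ⟨y, hPV hy⟩ = s.1 ⟨z, hPV hz⟩ := by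
  have hlc : IsLocallyConstant (s.1 : ↥(V ∩ I) → k) := s.2.1
  have hpre : _root_.IsPreconnected ((Subtype.val ⁻¹' P : Set ↥(V ∩ I))) := by
    rw [← Topology.IsInducing.subtypeVal.isPreconnected_image]
    have : (Subtype.val '' (Subtype.val ⁻¹' P : Set ↥(V ∩ I))) = P := by
      rw [Subtype.image_preimage_coe, inter_eq_right.mpr hPV]
    rwa [this]
  exact hlc.apply_eq_of_isPreconnected hpre hy hz

/-- Naturality of a sheaf morphism, applied pointwise. -/
lemma nat_eval {I J : Set ℝ} (f : intervalSheaf k I ⟶ intervalSheaf k J)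
    {C V : Opens (TopCat.of ℝ)} (h : C ≤ V) (s : ↥(secSub k I V.1)) {y : ℝ}
    (hy : y ∈ C.1 ∩ J) :
    ((f.hom.app (Opposite.op C)) ((resLM k I h) s)).1 ⟨y, hy⟩
      = ((f.hom.app (Opposite.op V)) s).1 ⟨y, ⟨h hy.1, hy.2⟩⟩ := by
  have hnat := f.hom.naturality (homOfLE h).op
  have h2 := congrArg (fun (g : (intervalPresheaf k I).obj (Opposite.op V) ⟶
      (intervalPresheaf k J).obj (Opposite.op C)) => g s) hnat
  exact congrFun (congrArg Subtype.val h2) ⟨y, hy⟩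

end HomIco

namespace HomIco

variable {k}

/-- A section of `k_I` vanishes near any point of `V` not in `I`. -/
lemma vanish_nbhd {I V : Set ℝ} (s : ↥(secSub k I V)) {p : ℝ}
    (hpV : p ∈ V) (hpI : p ∉ I) :
    ∃ O : Set ℝ, IsOpen O ∧ p ∈ O ∧
      ∀ (y : ℝ) (hy : y ∈ V ∩ I), y ∈ O → s.1 ⟨y, hy⟩ = 0 := by
  have hncl : p ∉ closure {y : ℝ | ∃ h : y ∈ V ∩ I, s.1 ⟨y, h⟩ ≠ 0} := by
    intro hcl
    obtain ⟨h, -⟩ := s.2.2 p hpV hcl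
    exact hpI h.2
  rw [mem_closure_iff] at hncl
  push_neg at hncl
  obtain ⟨O, hO, hpO, hdisj⟩ := hncl
  refine ⟨O, hO, hpO, fun y hy hyO => ?_⟩
  by_contra hne
  exact (eq_empty_iff_forall_notMem.mp hdisj y) ⟨hyO, ⟨hy, hne⟩⟩

/-- The value of `f s` at a point of `J` not in `I` is zero. -/
lemma eval_outside_zero {I J : Set ℝ} (f : intervalSheaf k I ⟶ intervalSheaf k J)
    (V : Opens (TopCat.of ℝ)) (s : ↥(secSub k I V.1)) {x : ℝ} (hx : x ∈ V.1 ∩ J)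
    (hxI : x ∉ I) : ((f.hom.app (Opposite.op V)) s).1 ⟨x, hx⟩ = 0 := by
  obtain ⟨O, hO, hpO, hzero⟩ := vanish_nbhd s hx.1 hxI
  set C : Opens (TopCat.of ℝ) := ⟨V.1 ∩ O, V.2.inter hO⟩ with hCdef
  have hCV : C ≤ V := fun y hy => hy.1
  have hres : (resLM k I hCV) s = 0 := by
    apply Subtype.ext
    funext y
    exact hzero y.1 ⟨hCV y.2.1, y.2.2⟩ y.2.1.2
  have hne := nat_eval f hCV s (y := x) ⟨⟨hx.1, hpO⟩, hx.2⟩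
  erw [hres, map_zero] at hne
  exact hne.symm

end HomIco

namespace HomIco

variable {k}

lemma ordConnected_Ico' (a : ℝ) (b : EReal) : (Ico' a b).OrdConnected := by
  constructor
  intro y hy z hz w hw
  exact ⟨le_trans hy.1 hw.1, lt_of_le_of_lt (EReal.coe_le_coe_iff.mpr hw.2) hz.2⟩

/-- The constant-one section of `k_{[a,b)}` over an open set contained in `(-∞, b)`. -/
def oneSec (a : ℝ) (b : EReal) (W : Opens (TopCat.of ℝ)) (hW : ∀ y : ℝ, y ∈ W.1 → (y : EReal) < b) :
    ↥(secSub k (Ico' a b) W.1) :=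
  ⟨fun _ => 1, IsLocallyConstant.const 1, by
    intro x hxW hxcl
    have hsupp : {y : ℝ | ∃ h : y ∈ W.1 ∩ Ico' a b, (fun _ : ↥(W.1 ∩ Ico' a b) => (1 : k)) ⟨y, h⟩ ≠ 0} ⊆ Ici a := by
      rintro y ⟨h, -⟩
      exact h.2.1
    have hxa : a ≤ x := by
      have := closure_mono hsupp hxcl
      rwa [isClosed_Ici.closure_eq] at this
    exact ⟨⟨hxW, hxa, hW x hxW⟩, one_ne_zero⟩⟩

variable (c : ℝ) (b : EReal)

/-- A real number `b'` with `c < b' ≤ b` (whenever `c < b`). -/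
def bR : ℝ := if b = ⊤ then c + 1 else b.toReal

lemma bR_le (hb : (⊥ : EReal) < b) : (bR c b : EReal) ≤ b := by
  rw [bR]
  split
  · next h => rw [h]; exact le_top
  · next h => rw [EReal.coe_toReal h hb.ne']

lemma lt_bR (hb : (⊥ : EReal) < b) (hcb : (c : EReal) < b) : c < bR c b := by
  rw [bR]
  split
  · linarith
  · next h =>
    rw [← EReal.coe_lt_coe_iff, EReal.coe_toReal h hb.ne']
    exact hcb

/-- The canonical small open interval around `c`. -/
def Vstar : Opens (TopCat.of ℝ) := ⟨(Ioo (c - 1) (bR c b) : Set ℝ), show IsOpen (Ioo (c - 1) (bR c b) : Set ℝ) from isOpen_Ioo⟩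

lemma Vstar_lt (hb : (⊥ : EReal) < b) : ∀ y : ℝ, y ∈ (Vstar c b).1 → (y : EReal) < b :=
  fun y hy => lt_of_lt_of_le (EReal.coe_lt_coe_iff.mpr hy.2) (bR_le c b hb)

variable {c b} in
lemma c_mem_Vstar (hb : (⊥ : EReal) < b) (hcb : (c : EReal) < b) : c ∈ (Vstar c b).1 :=
  ⟨by linarith, lt_bR c b hb hcb⟩

variable (a d : ℝ)

/-- The scalar attached to a morphism `k_{[a,b)} ⟶ k_{[c,d]}`. -/
def Lam (hb : (⊥ : EReal) < b) (hcd : c ≤ d)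
    (f : intervalSheaf k (Ico' a b) ⟶ intervalSheaf k (Icc c d)) : k :=
  if hcb : c < bR c b then
    ((f.hom.app (Opposite.op (Vstar c b))) (oneSec a b (Vstar c b) (Vstar_lt c b hb))).1
      ⟨c, ⟨⟨by linarith, hcb⟩, ⟨le_refl c, hcd⟩⟩⟩
  else 0

end HomIco

namespace HomIco

variable {k}

lemma main_eval {a : ℝ} {b : EReal} {c d : ℝ} (hb : (⊥ : EReal) < b) (hcd : c ≤ d)
    (f : intervalSheaf k (Ico' a b) ⟶ intervalSheaf k (Icc c d))
    (VS : Set ℝ) (hVS : IsOpen VS) (s : ↥(secSub k (Ico' a b) VS)) {x : ℝ}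
    (hx : x ∈ VS ∩ Icc c d) (hxI : x ∈ Ico' a b) :
    ((f.hom.app (Opposite.op (⟨VS, hVS⟩ : Opens (TopCat.of ℝ)))) s).1 ⟨x, hx⟩
      = Lam c b a d hb hcd f * s.1 ⟨x, ⟨hx.1, hxI⟩⟩ := by
  set V : Opens (TopCat.of ℝ) := ⟨VS, hVS⟩ with hVdef
  obtain ⟨hax, hxb⟩ := hxI
  obtain ⟨hxV, hxJ⟩ := hx
  have hcx : c ≤ x := hxJ.1
  have hcb : (c : EReal) < b := lt_of_le_of_lt (EReal.coe_le_coe_iff.mpr hcx) hxb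
  have hcbR : c < bR c b := lt_bR c b hb hcb
  -- the connected component of x in V
  set C : Set ℝ := connectedComponentIn VS x with hCdef
  have hCopen : IsOpen C := hVS.connectedComponentIn
  have hxC : x ∈ C := mem_connectedComponentIn hxV
  have hCV : C ⊆ VS := connectedComponentIn_subset _ _
  have hCpre : _root_.IsPreconnected C := isPreconnected_connectedComponentIn
  have hCord : C.OrdConnected := hCpre.ordConnected
  set OC : Opens (TopCat.of ℝ) := ⟨C, hCopen⟩ with hOCdef
  have hle : OC ≤ V := hCV
  have hstep1 : ((f.hom.app (Opposite.op V)) s).1 ⟨x, ⟨hxV, hxJ⟩⟩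
      = ((f.hom.app (Opposite.op OC)) ((resLM k (Ico' a b) hle) s)).1 ⟨x, ⟨hxC, hxJ⟩⟩ :=
    (nat_eval f hle s ⟨hxC, hxJ⟩).symm
  set μ := s.1 ⟨x, ⟨hxV, ⟨hax, hxb⟩⟩⟩ with hμdef
  have hCIpre : _root_.IsPreconnected (C ∩ Ico' a b) :=
    (hCord.inter (ordConnected_Ico' a b)).isPreconnected
  have hCIsub : C ∩ Ico' a b ⊆ VS ∩ Ico' a b := inter_subset_inter hCV Subset.rfl
  have hconst : ∀ (y : ℝ) (hy : y ∈ C ∩ Ico' a b), s.1 ⟨y, hCIsub hy⟩ = μ :=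
    fun y hy => sec_const s hCIpre hCIsub hy ⟨hxC, ⟨hax, hxb⟩⟩
  by_cases hcase : ∀ p ∈ C, (p : EReal) < b
  · -- Case B : C ⊆ (-∞, b)
    set V1 : Opens (TopCat.of ℝ) := ⟨C ∪ (Ioo (c - 1) x : Set ℝ),
      hCopen.union (show IsOpen (Ioo (c - 1) x : Set ℝ) from isOpen_Ioo)⟩ with hV1def
    have hV1b : ∀ y : ℝ, y ∈ (C ∪ (Ioo (c - 1) x : Set ℝ)) → (y : EReal) < b := by
      rintro y (hy | hy)
      · exact hcase y hy
      · exact lt_trans (EReal.coe_lt_coe_iff.mpr hy.2) hxb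
    have hcV1 : c ∈ (C ∪ (Ioo (c - 1) x : Set ℝ)) := by
      rcases eq_or_lt_of_le hcx with h | h
      · exact Or.inl (h ▸ hxC)
      · exact Or.inr ⟨by linarith, h⟩
    set one1 := oneSec a b V1 hV1b (k := k) with hone1def
    have hCV1 : OC ≤ V1 := fun y hy => Or.inl hy
    have hres : (resLM k (Ico' a b) hCV1) (μ • one1) = (resLM k (Ico' a b) hle) s := by
      apply Subtype.ext
      funext y
      have h1 : ((resLM k (Ico' a b) hCV1) (μ • one1)).1 y = μ * 1 := rfl
      rw [h1, mul_one]
      exact (hconst y.1 ⟨y.2.1, y.2.2⟩).symm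
    have hstep2 : ((f.hom.app (Opposite.op OC)) ((resLM k (Ico' a b) hle) s)).1 ⟨x, ⟨hxC, hxJ⟩⟩
        = ((f.hom.app (Opposite.op V1)) (μ • one1)).1 ⟨x, ⟨Or.inl hxC, hxJ⟩⟩ := by
      rw [← hres]
      exact nat_eval f hCV1 (μ • one1) ⟨hxC, hxJ⟩
    have hsmul : (f.hom.app (Opposite.op V1)) (μ • one1)
        = μ • (f.hom.app (Opposite.op V1)) one1 := map_smul _ μ one1
    set w := (f.hom.app (Opposite.op V1)) one1 with hwdef
    have hIccsub : Icc c x ⊆ (C ∪ (Ioo (c - 1) x : Set ℝ)) ∩ Icc c d := by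
      intro y hy
      refine ⟨?_, ⟨hy.1, le_trans hy.2 hxJ.2⟩⟩
      rcases eq_or_lt_of_le hy.2 with h | h
      · exact Or.inl (h ▸ hxC)
      · exact Or.inr ⟨by linarith [hy.1], h⟩
    have hwconst : w.1 ⟨x, hIccsub ⟨hcx, le_refl x⟩⟩ = w.1 ⟨c, hIccsub ⟨le_refl c, hcx⟩⟩ :=
      sec_const w isPreconnected_Icc hIccsub ⟨hcx, le_refl x⟩ ⟨le_refl c, hcx⟩
    have hwc : w.1 ⟨c, hIccsub ⟨le_refl c, hcx⟩⟩ = Lam c b a d hb hcd f := by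
      set W : Opens (TopCat.of ℝ) := ⟨V1.1 ∩ (Vstar c b).1, V1.2.inter (Vstar c b).2⟩
        with hWdef
      have hWV1 : W ≤ V1 := fun y hy => hy.1
      have hWVs : W ≤ Vstar c b := fun y hy => hy.2
      have hcW : c ∈ W.1 := ⟨hcV1, c_mem_Vstar hb hcb⟩
      have hresW : (resLM k (Ico' a b) hWV1) one1
          = (resLM k (Ico' a b) hWVs) (oneSec a b (Vstar c b) (Vstar_lt c b hb)) :=
        Subtype.ext rfl
      have e1 := nat_eval f hWV1 one1 (y := c) ⟨hcW, ⟨le_refl c, hcd⟩⟩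
      have e2 := nat_eval f hWVs (oneSec a b (Vstar c b) (Vstar_lt c b hb)) (y := c) ⟨hcW, ⟨le_refl c, hcd⟩⟩
      rw [hresW] at e1
      rw [e2] at e1
      rw [← e1, Lam, dif_pos hcbR]
    have hfinal : ((f.hom.app (Opposite.op V1)) (μ • one1)).1 ⟨x, ⟨Or.inl hxC, hxJ⟩⟩
        = μ * w.1 ⟨x, ⟨Or.inl hxC, hxJ⟩⟩ := by rw [hsmul]; rfl
    rw [hstep1, hstep2, hfinal, hwconst, hwc, mul_comm]
  · -- Case A : C reaches past b; the section must vanish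
    push_neg at hcase
    obtain ⟨p, hpC, hpb⟩ := hcase
    have hbtop : b ≠ ⊤ := by
      intro h
      rw [h] at hpb
      exact (EReal.coe_lt_top p).not_ge hpb
    set br := b.toReal with hbrdef
    have hbrb : (br : EReal) = b := EReal.coe_toReal hbtop hb.ne'
    have hxbr : x < br := EReal.coe_lt_coe_iff.mp (by rw [hbrb]; exact hxb)
    have hbrp : br ≤ p := EReal.coe_le_coe_iff.mp (by rw [hbrb]; exact hpb)
    have hbrC : br ∈ C := hCord.out hxC hpC ⟨hxbr.le, hbrp⟩
    have hIco : Ico x br ⊆ C ∩ Ico' a b := by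
      intro y hy
      refine ⟨hCord.out hxC hbrC ⟨hy.1, hy.2.le⟩, ⟨hax.trans hy.1, ?_⟩⟩
      rw [← hbrb]
      exact EReal.coe_lt_coe_iff.mpr hy.2
    have hμ : μ = 0 := by
      by_contra hμne
      have hsupp : Ico x br ⊆ {y : ℝ | ∃ h : y ∈ VS ∩ Ico' a b, s.1 ⟨y, h⟩ ≠ 0} := by
        intro y hy
        exact ⟨hCIsub (hIco hy), by rw [hconst y (hIco hy)]; exact hμne⟩
      have hbrcl : br ∈ closure (Ico x br) := by
        rw [closure_Ico hxbr.ne]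
        exact ⟨hxbr.le, le_refl _⟩
      obtain ⟨⟨-, -, hbrI⟩, -⟩ := s.2.2 br (hCV hbrC) (closure_mono hsupp hbrcl)
      rw [← hbrb] at hbrI
      exact lt_irrefl _ hbrI
    have hres0 : (resLM k (Ico' a b) hle) s = 0 := by
      apply Subtype.ext
      funext y
      have := hconst y.1 ⟨y.2.1, y.2.2⟩
      rw [hμ] at this
      exact this
    erw [hstep1, hres0, map_zero, hμ, mul_zero]
    rfl

end HomIco

namespace HomIco

variable {k}

open Classical in
/-- The canonical map on sections: restrict and extend by zero. -/
def canonFun {a : ℝ} {b : EReal} {c d : ℝ} (V : Set ℝ) (s : ↥(V ∩ Ico' a b) → k) :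
    ↥(V ∩ Icc c d) → k :=
  fun y => if h : y.1 ∈ Ico' a b then s ⟨y.1, ⟨y.2.1, h⟩⟩ else 0

lemma canonFun_mem {a : ℝ} {b : EReal} {c d : ℝ} (hac : a ≤ c) (V : Set ℝ) (hV : IsOpen V)
    (s : ↥(secSub k (Ico' a b) V)) :
    canonFun (a := a) (b := b) (c := c) (d := d) V s.1 ∈ secSub k (Icc c d) V := by
  constructor
  · -- locally constant
    rw [IsLocallyConstant.iff_exists_open]
    rintro ⟨y₀, hy₀⟩
    by_cases hy₀I : y₀ ∈ Ico' a b
    · obtain ⟨W, hWopen, hpW, hWconst⟩ := s.2.1.exists_open (⟨y₀, ⟨hy₀.1, hy₀I⟩⟩ : ↥(V ∩ Ico' a b))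
      obtain ⟨O, hOopen, hWO⟩ := isOpen_induced_iff.mp hWopen
      subst hWO
      refine ⟨Subtype.val ⁻¹' (O ∩ {y : ℝ | (y : EReal) < b}),
        ((hOopen.inter (isOpen_lt continuous_coe_real_ereal continuous_const)).preimage
          continuous_subtype_val), ⟨hpW, hy₀I.2⟩, ?_⟩
      rintro ⟨z, hz⟩ ⟨hzO, hzb⟩
      have hzI : z ∈ Ico' a b := ⟨le_trans hac hz.2.1, hzb⟩
      show canonFun V s.1 ⟨z, hz⟩ = canonFun V s.1 ⟨y₀, hy₀⟩
      simp only [canonFun]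
      rw [dif_pos hzI, dif_pos hy₀I]
      exact hWconst ⟨z, ⟨hz.1, hzI⟩⟩ hzO
    · obtain ⟨O, hOopen, hy₀O, hzero⟩ := vanish_nbhd s hy₀.1 hy₀I
      refine ⟨Subtype.val ⁻¹' O, hOopen.preimage continuous_subtype_val, hy₀O, ?_⟩
      rintro ⟨z, hz⟩ hzO
      show canonFun V s.1 ⟨z, hz⟩ = canonFun V s.1 ⟨y₀, hy₀⟩
      simp only [canonFun]
      rw [dif_neg hy₀I]
      by_cases hzI : z ∈ Ico' a b
      · rw [dif_pos hzI]
        exact hzero z ⟨hz.1, hzI⟩ hzO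
      · rw [dif_neg hzI]
  · -- support closed
    intro x hxV hxcl
    have hsub : {y : ℝ | ∃ h : y ∈ V ∩ Icc c d, canonFun V s.1 ⟨y, h⟩ ≠ 0}
        ⊆ {y : ℝ | ∃ h : y ∈ V ∩ Ico' a b, s.1 ⟨y, h⟩ ≠ 0} ∩ Icc c d := by
      rintro y ⟨h, hy⟩
      by_cases hyI : y ∈ Ico' a b
      · simp only [canonFun] at hy
        rw [dif_pos hyI] at hy
        exact ⟨⟨⟨h.1, hyI⟩, hy⟩, h.2⟩
      · simp only [canonFun] at hy
        rw [dif_neg hyI] at hy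
        exact absurd rfl hy
    have hcl2 := closure_mono hsub hxcl
    have hcl3 : x ∈ closure {y : ℝ | ∃ h : y ∈ V ∩ Ico' a b, s.1 ⟨y, h⟩ ≠ 0} ∩ Icc c d := by
      refine ⟨(closure_inter_subset_inter_closure _ _ hcl2).1, ?_⟩
      have := (closure_inter_subset_inter_closure _ _ hcl2).2
      rwa [isClosed_Icc.closure_eq] at this
    obtain ⟨hxVI, hsx⟩ := s.2.2 x hxV hcl3.1
    refine ⟨⟨hxV, hcl3.2⟩, ?_⟩
    show canonFun V s.1 ⟨x, ⟨hxV, hcl3.2⟩⟩ ≠ 0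
    simp only [canonFun]
    rw [dif_pos hxVI.2]
    exact hsx

/-- The canonical morphism `k_{[a,b)} ⟶ k_{[c,d]}` (for `a ≤ c`). -/
def phi (a : ℝ) (b : EReal) (c d : ℝ) (hac : a ≤ c) :
    intervalSheaf k (Ico' a b) ⟶ intervalSheaf k (Icc c d) :=
  ⟨{ app := fun V => ModuleCat.ofHom
      { toFun := fun s => ⟨canonFun (a := a) (b := b) (c := c) (d := d) V.unop.1 s.1,
          canonFun_mem hac V.unop.1 V.unop.2 s⟩
        map_add' := by
          intro s t
          apply Subtype.ext
          funext y
          show canonFun V.unop.1 (s.1 + t.1) y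
            = canonFun V.unop.1 s.1 y + canonFun V.unop.1 t.1 y
          simp only [canonFun]
          by_cases hyI : y.1 ∈ Ico' a b
          · rw [dif_pos hyI, dif_pos hyI, dif_pos hyI]
            rfl
          · rw [dif_neg hyI, dif_neg hyI, dif_neg hyI, add_zero]
        map_smul' := by
          intro μ s
          apply Subtype.ext
          funext y
          show canonFun V.unop.1 (μ • s.1) y = μ • canonFun V.unop.1 s.1 y
          simp only [canonFun]
          by_cases hyI : y.1 ∈ Ico' a b
          · rw [dif_pos hyI, dif_pos hyI]
            rfl
          · rw [dif_neg hyI, dif_neg hyI, smul_zero] }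
     naturality := fun U W g => rfl }⟩

end HomIco

namespace HomIco

variable {k}

lemma hom_ext {I J : Set ℝ} {f g : intervalSheaf k I ⟶ intervalSheaf k J}
    (h : ∀ (V : Opens (TopCat.of ℝ)) (s : ↥(secSub k I V.1)) (y : ↥(V.1 ∩ J)),
      ((f.hom.app (Opposite.op V)) s).1 y = ((g.hom.app (Opposite.op V)) s).1 y) : f = g := by
  apply Sheaf.hom_ext
  apply NatTrans.ext
  funext V
  apply ModuleCat.hom_ext
  apply LinearMap.ext
  intro s
  apply Subtype.ext
  funext y
  exact h V.unop s y

lemma Lam_add {a : ℝ} {b : EReal} {c d : ℝ} (hb : (⊥ : EReal) < b) (hcd : c ≤ d)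
    (f g : intervalSheaf k (Ico' a b) ⟶ intervalSheaf k (Icc c d)) :
    Lam c b a d hb hcd (f + g) = Lam c b a d hb hcd f + Lam c b a d hb hcd g := by
  by_cases hcb : c < bR c b
  · rw [Lam, Lam, Lam, dif_pos hcb, dif_pos hcb, dif_pos hcb]
    rfl
  · rw [Lam, Lam, Lam, dif_neg hcb, dif_neg hcb, dif_neg hcb, add_zero]

lemma Lam_smul {a : ℝ} {b : EReal} {c d : ℝ} (hb : (⊥ : EReal) < b) (hcd : c ≤ d)
    (μ : k) (f : intervalSheaf k (Ico' a b) ⟶ intervalSheaf k (Icc c d)) :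
    Lam c b a d hb hcd (μ • f) = μ * Lam c b a d hb hcd f := by
  by_cases hcb : c < bR c b
  · rw [Lam, Lam, dif_pos hcb, dif_pos hcb]
    rfl
  · rw [Lam, Lam, dif_neg hcb, dif_neg hcb, mul_zero]

lemma Lam_phi {a : ℝ} {b : EReal} {c d : ℝ} (hb : (⊥ : EReal) < b) (hcd : c ≤ d)
    (hac : a ≤ c) (hcb : (c : EReal) < b) :
    Lam c b a d hb hcd (phi a b c d hac (k := k)) = (1 : k) := by
  rw [Lam, dif_pos (lt_bR c b hb hcb)]
  show canonFun (Vstar c b).1 (oneSec a b (Vstar c b) (Vstar_lt c b hb)).1 _ = 1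
  simp only [canonFun]
  rw [dif_pos (show c ∈ Ico' a b from ⟨hac, hcb⟩)]
  rfl

lemma phi_eval {a : ℝ} {b : EReal} {c d : ℝ} (hac : a ≤ c) (μ : k)
    (V : Opens (TopCat.of ℝ)) (s : ↥(secSub k (Ico' a b) V.1)) (y : ↥(V.1 ∩ (Icc c d : Set ℝ))) :
    (((μ • phi a b c d hac).hom.app (Opposite.op V)) s).1 y
      = μ * canonFun (a := a) (b := b) V.1 s.1 y := rfl

end HomIco
/-- For `a ∈ ℝ`, `b ∈ ℝ ∪ {+∞}` with `a < b`, and real numbers `c ≤ d`,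
the space `Hom(k_{[a,b)}, k_{[c,d]})` is one-dimensional over `k` if `a ≤ c < b`,
and is zero otherwise. -/
theorem hom_ico_compact (k : Type) [Field k] (a : ℝ) (b : EReal) (hab : (a : EReal) < b)
    (c d : ℝ) (hcd : c ≤ d) :
    ((a ≤ c ∧ (c : EReal) < b) →
      Module.rank k (intervalSheaf k (Ico' a b) ⟶ intervalSheaf k (Set.Icc c d)) = 1) ∧
    (¬ (a ≤ c ∧ (c : EReal) < b) →
      ∀ f : intervalSheaf k (Ico' a b) ⟶ intervalSheaf k (Set.Icc c d), f = 0) := by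
  have hb : (⊥ : EReal) < b := lt_trans (EReal.bot_lt_coe a) hab
  constructor
  · rintro ⟨hac, hcb⟩
    have e : (intervalSheaf k (Ico' a b) ⟶ intervalSheaf k (Set.Icc c d)) ≃ₗ[k] k :=
      { toFun := HomIco.Lam c b a d hb hcd
        map_add' := HomIco.Lam_add hb hcd
        map_smul' := fun μ f => by
          simp only [RingHom.id_apply, smul_eq_mul]
          exact HomIco.Lam_smul hb hcd μ f
        invFun := fun μ => μ • HomIco.phi a b c d hac
        left_inv := by
          intro f
          apply HomIco.hom_ext
          intro V s y
          rw [HomIco.phi_eval hac (HomIco.Lam c b a d hb hcd f) V s y]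
          by_cases hyI : y.1 ∈ Ico' a b
          · have hc : HomIco.canonFun (a := a) (b := b) (c := c) (d := d) V.1 s.1 y
                = s.1 ⟨y.1, ⟨y.2.1, hyI⟩⟩ := by
              simp only [HomIco.canonFun]
              rw [dif_pos hyI]
            have h1 : ((f.hom.app (Opposite.op V)) s).1 ⟨y.1, y.2⟩
                = HomIco.Lam c b a d hb hcd f * s.1 ⟨y.1, ⟨y.2.1, hyI⟩⟩ :=
              HomIco.main_eval hb hcd f V.1 V.2 s y.2 hyI
            rw [hc]
            exact h1.symm
          · have h0 : ((f.hom.app (Opposite.op V)) s).1 ⟨y.1, y.2⟩ = 0 :=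
              HomIco.eval_outside_zero f V s y.2 hyI
            have hc : HomIco.canonFun (a := a) (b := b) (c := c) (d := d) V.1 s.1 y = 0 := by
              simp only [HomIco.canonFun]
              rw [dif_neg hyI]
            rw [hc, mul_zero]
            exact h0.symm
        right_inv := by
          intro μ
          show HomIco.Lam c b a d hb hcd (μ • HomIco.phi a b c d hac) = μ
          rw [HomIco.Lam_smul hb hcd μ (HomIco.phi a b c d hac),
            HomIco.Lam_phi hb hcd hac hcb, mul_one] }
    rw [LinearEquiv.rank_eq e]
    exact Module.rank_self k
  · intro h f
    apply HomIco.hom_ext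
    intro V s y
    have hzero : (((0 : intervalSheaf k (Ico' a b) ⟶ intervalSheaf k (Set.Icc c d)).hom.app
        (Opposite.op V)) s).1 y = 0 := rfl
    rw [hzero]
    by_cases hyI : y.1 ∈ Ico' a b
    · have hca : c < a := by
        rcases not_and_or.mp h with h' | h'
        · exact lt_of_not_ge h'
        · exfalso
          have hbc : b ≤ (c : EReal) := not_lt.mp h'
          have := EReal.coe_le_coe_iff.mpr y.2.2.1
          exact absurd hyI.2 (not_lt.mpr (le_trans hbc this))
      have hcb : (c : EReal) < b := lt_trans (EReal.coe_lt_coe_iff.mpr hca) hab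
      have hLam0 : HomIco.Lam c b a d hb hcd f = 0 := by
        rw [HomIco.Lam, dif_pos (HomIco.lt_bR c b hb hcb)]
        exact HomIco.eval_outside_zero f (HomIco.Vstar c b)
          (HomIco.oneSec a b _ (HomIco.Vstar_lt c b hb))
          ⟨HomIco.c_mem_Vstar hb hcb, ⟨le_refl c, hcd⟩⟩
          (fun hcI => absurd hcI.1 (not_le.mpr hca))
      have h1 : ((f.hom.app (Opposite.op V)) s).1 ⟨y.1, y.2⟩
          = HomIco.Lam c b a d hb hcd f * s.1 ⟨y.1, ⟨y.2.1, hyI⟩⟩ :=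
        HomIco.main_eval hb hcd f V.1 V.2 s y.2 hyI
      rw [hLam0, zero_mul] at h1
      exact h1
    · exact HomIco.eval_outside_zero f V s y.2 hyI

end
end
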